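/- Let n be a complex semisimple Lie algebra, z ∈ n, λ ∈ ℂ, and suppose x·y = {{z,x},y} + λ{x,y} defines a post-Lie algebra structure on (g,n) for some Lie bracket [,] on the same space. Then the operator ad(z) satisfies ad(z)³ + (2λ+1)ad(z)² + (λ²+λ)ad(z) = 0. Moreover, if λ = 0 then z = 0 (so x·y = 0 and [x,y] = {x,y}), and if λ = -1 then z = 0 (so x·y = -{x,y} and [x,y] = -{x,y}). -/

import Mathlib

attribute [local instance 100] LieRing.ofAssociativeRing
attribute [local instance 100] LieAlgebra.ofAssociativeAlgebra

private theorem aux_zero_postlie {n : Type*} [LieRing n] [LieAlgebra ℂ n]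
    [FiniteDimensional ℂ n] [LieAlgebra.IsSemisimple ℂ n] (z : n)
    (hE : ∀ x y : n, ⁅⁅z, x⁆, ⁅z, y⁆⁆ = ⁅z, ⁅z, ⁅x, y⁆⁆⁆ + ⁅z, ⁅x, y⁆⁆) : z = 0 := by
  have hinj : ∀ m : n, (∀ w : n, ⁅m, w⁆ = 0) → m = 0 := by
    intro m h
    have hk : m ∈ (LieAlgebra.ad ℂ n).ker := by
      rw [LieHom.mem_ker]; ext w; simpa using h w
    rwa [LieAlgebra.ad_ker_eq_bot_of_hasTrivialRadical, LieSubmodule.mem_bot] at hk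
  have htwo : ∀ m : n, m + m = 0 → m = 0 := by
    intro m h
    have h2 : (2 : ℂ) • m = 0 := by rw [two_smul]; exact h
    simpa using (smul_eq_zero.mp h2).resolve_left (by norm_num)
  have hA3 : ∀ y : n, ⁅z, ⁅z, ⁅z, y⁆⁆⁆ = -⁅z, ⁅z, y⁆⁆ := by
    intro y
    have h := hE z y
    simp only [lie_self, zero_lie] at h
    linear_combination (norm := module) -h
  have hS1 : ∀ x y : n, ⁅⁅z, ⁅z, x⁆⁆, ⁅z, y⁆⁆ = -⁅⁅z, x⁆, ⁅z, ⁅z, y⁆⁆⁆ := by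
    intro x y
    have h := congrArg (fun m => ⁅z, m⁆) (hE x y)
    simp only [lie_add] at h
    rw [hA3 ⁅x, y⁆] at h
    have hl : ⁅z, ⁅⁅z, x⁆, ⁅z, y⁆⁆⁆ = ⁅⁅z, ⁅z, x⁆⁆, ⁅z, y⁆⁆ + ⁅⁅z, x⁆, ⁅z, ⁅z, y⁆⁆⁆ :=
      leibniz_lie z ⁅z, x⁆ ⁅z, y⁆
    linear_combination (norm := module) h - hl
  have hS2 : ∀ x y : n, ⁅⁅z, ⁅z, x⁆⁆, ⁅z, y⁆⁆ = 0 := by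
    intro x y
    have e1 := hS1 ⁅z, x⁆ y
    rw [hA3 x] at e1
    have e2 := hS1 x ⁅z, y⁆
    rw [hA3 y] at e2
    have e3 := hS1 x y
    simp only [neg_lie, lie_neg, neg_neg] at e1 e2
    apply htwo
    linear_combination (norm := module) -e1 + e2 + e3
  have hA2 : ∀ x : n, ⁅z, ⁅z, x⁆⁆ = 0 := by
    let J : LieIdeal ℂ n :=
      { carrier := {w | ⁅z, w⁆ = -w}
        add_mem' := by intro u v hu hv; simp only [Set.mem_setOf_eq] at *
                       rw [lie_add, hu, hv, neg_add]
        zero_mem' := by simp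
        smul_mem' := by intro t u hu; simp only [Set.mem_setOf_eq] at *
                        rw [lie_smul, hu, smul_neg]
        lie_mem := by
          intro x w hw
          simp only [Set.mem_setOf_eq] at *
          have hw2 : ⁅z, ⁅z, w⁆⁆ = w := by rw [hw, lie_neg, hw, neg_neg]
          have h1 : ⁅⁅z, x⁆, w⁆ = 0 := by
            have h := hS2 w x
            rw [hw2] at h
            rw [← lie_skew, h, neg_zero]
          have h := leibniz_lie z x w
          rw [hw, h1, lie_neg] at h
          rw [h, zero_add] }
    have hJab : IsLieAbelian J := by
      constructor
      rintro ⟨u, hu⟩ ⟨v, hv⟩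
      have hu' : ⁅z, u⁆ = -u := hu
      have hv' : ⁅z, v⁆ = -v := hv
      have hu2 : ⁅z, ⁅z, u⁆⁆ = u := by rw [hu', lie_neg, hu', neg_neg]
      have hv1 : v = ⁅z, -v⁆ := by rw [lie_neg, hv', neg_neg]
      have huv : ⁅u, v⁆ = 0 := by
        conv_lhs => rw [← hu2, hv1]
        exact hS2 u (-v)
      ext
      simpa using huv
    have hJbot : J = ⊥ :=
      (LieAlgebra.hasTrivialRadical_iff_no_abelian_ideals ℂ n).mp inferInstance J hJab
    intro x
    have hmem : ⁅z, ⁅z, x⁆⁆ ∈ J := hA3 x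
    rw [hJbot, LieSubmodule.mem_bot] at hmem
    exact hmem
  have hHom : ∀ x y : n, ⁅z, ⁅x, y⁆⁆ = ⁅⁅z, x⁆, ⁅z, y⁆⁆ := by
    intro x y
    rw [hE x y, hA2 ⁅x, y⁆, zero_add]
  let I : LieIdeal ℂ n :=
    { carrier := {w | ⁅z, w⁆ = 0}
      add_mem' := by intro u v hu hv; simp only [Set.mem_setOf_eq] at *
                     rw [lie_add, hu, hv, add_zero]
      zero_mem' := by simp
      smul_mem' := by intro t u hu; simp only [Set.mem_setOf_eq] at *
                      rw [lie_smul, hu, smul_zero]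
      lie_mem := by
        intro x w hw
        simp only [Set.mem_setOf_eq] at *
        rw [hHom x w, hw, lie_zero] }
  have hmemI : ∀ w : n, w ∈ I ↔ ⁅z, w⁆ = 0 := fun w => Iff.rfl
  let K : LieIdeal ℂ n := Iᶜ
  have hIK : I ⊓ K = ⊥ := inf_compl_eq_bot
  have hIKs : I ⊔ K = ⊤ := sup_compl_eq_top
  have hbot : ∀ w : n, w ∈ I → w ∈ K → w = 0 := by
    intro w hwI hwK
    have h : w ∈ I ⊓ K := by rw [LieSubmodule.mem_inf]; exact ⟨hwI, hwK⟩
    rwa [hIK, LieSubmodule.mem_bot] at h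
  have hKab : IsLieAbelian K := by
    constructor
    rintro ⟨u, hu⟩ ⟨v, hv⟩
    have h1 : ⁅⁅z, u⁆, v⁆ = 0 :=
      hbot _ (lie_mem_left ℂ n I ⁅z, u⁆ v ((hmemI _).mpr (hA2 u)))
             (lie_mem_right ℂ n K ⁅z, u⁆ v hv)
    have h2 : ⁅u, ⁅z, v⁆⁆ = 0 :=
      hbot _ (lie_mem_right ℂ n I u ⁅z, v⁆ ((hmemI _).mpr (hA2 v)))
             (lie_mem_left ℂ n K u ⁅z, v⁆ hu)
    have huv : ⁅u, v⁆ = 0 := by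
      apply hbot
      · have h := leibniz_lie z u v
        rw [h1, h2] at h
        exact (hmemI _).mpr (by rw [h, add_zero])
      · exact lie_mem_left ℂ n K u v hu
    ext
    simpa using huv
  have hKbot : K = ⊥ :=
    (LieAlgebra.hasTrivialRadical_iff_no_abelian_ideals ℂ n).mp inferInstance K hKab
  have hItop : I = ⊤ := by
    rw [hKbot, sup_bot_eq] at hIKs
    exact hIKs
  apply hinj
  intro w
  have hw : w ∈ I := by rw [hItop]; trivial
  exact (hmemI w).mp hw

/-- Suppose x·y = {{z,x},y} + λ{x,y} is a post-Lie algebra structure on (g,n) with n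
complex semisimple, for some Lie bracket [,] = lg on the same space. Then
ad(z)³ + (2λ+1)ad(z)² + (λ²+λ)ad(z) = 0; if λ = 0 then z = 0 (so x·y = 0 and
[x,y] = {x,y}), and if λ = -1 then z = 0 (so x·y = -{x,y} and [x,y] = -{x,y}). -/
theorem postLie_from_ad_plus_scalar
    (n : Type*) [LieRing n] [LieAlgebra ℂ n] [FiniteDimensional ℂ n]
    [LieAlgebra.IsSemisimple ℂ n]
    (z : n) (lam : ℂ)
    (lg : n →ₗ[ℂ] n →ₗ[ℂ] n)
    (hg_alt : ∀ x, lg x x = 0)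
    (hg_jac : ∀ x y w, lg x (lg y w) + lg y (lg w x) + lg w (lg x y) = 0)
    -- the product x·y = {{z,x},y} + λ{x,y} is a post-Lie structure on (g,n)
    (h1 : ∀ x y : n, (⁅⁅z, x⁆, y⁆ + lam • ⁅x, y⁆) - (⁅⁅z, y⁆, x⁆ + lam • ⁅y, x⁆)
        = lg x y - ⁅x, y⁆)
    (h2 : ∀ x y w : n,
        (⁅⁅z, lg x y⁆, w⁆ + lam • ⁅lg x y, w⁆) =
          (⁅⁅z, x⁆, ⁅⁅z, y⁆, w⁆ + lam • ⁅y, w⁆⁆ + lam • ⁅x, ⁅⁅z, y⁆, w⁆ + lam • ⁅y, w⁆⁆) -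
          (⁅⁅z, y⁆, ⁅⁅z, x⁆, w⁆ + lam • ⁅x, w⁆⁆ + lam • ⁅y, ⁅⁅z, x⁆, w⁆ + lam • ⁅x, w⁆⁆))
    (h3 : ∀ x y w : n,
        (⁅⁅z, x⁆, ⁅y, w⁆⁆ + lam • ⁅x, ⁅y, w⁆⁆) =
          ⁅⁅⁅z, x⁆, y⁆ + lam • ⁅x, y⁆, w⁆ + ⁅y, ⁅⁅z, x⁆, w⁆ + lam • ⁅x, w⁆⁆) :
    ((LieAlgebra.ad ℂ n z) ^ 3 + (2 * lam + 1) • (LieAlgebra.ad ℂ n z) ^ 2 +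
        (lam ^ 2 + lam) • (LieAlgebra.ad ℂ n z) = 0) ∧
    (lam = 0 → z = 0 ∧ (∀ x y : n, ⁅⁅z, x⁆, y⁆ + lam • ⁅x, y⁆ = 0) ∧
        (∀ x y : n, lg x y = ⁅x, y⁆)) ∧
    (lam = -1 → z = 0 ∧ (∀ x y : n, ⁅⁅z, x⁆, y⁆ + lam • ⁅x, y⁆ = -⁅x, y⁆) ∧
        (∀ x y : n, lg x y = -⁅x, y⁆)) := by
  have hinj : ∀ m : n, (∀ w : n, ⁅m, w⁆ = 0) → m = 0 := by
    intro m h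
    have hk : m ∈ (LieAlgebra.ad ℂ n).ker := by
      rw [LieHom.mem_ker]; ext w; simpa using h w
    rwa [LieAlgebra.ad_ker_eq_bot_of_hasTrivialRadical, LieSubmodule.mem_bot] at hk
  -- lg is forced
  have hlg : ∀ x y : n, lg x y = ⁅z, ⁅x, y⁆⁆ + (2 * lam + 1) • ⁅x, y⁆ := by
    intro x y
    have h := h1 x y
    have j1 := lie_lie z x y
    have j2 : ⁅⁅z, y⁆, x⁆ = -⁅x, ⁅z, y⁆⁆ := by rw [← lie_skew]
    have j3 : ⁅y, x⁆ = -⁅x, y⁆ := by rw [← lie_skew]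
    linear_combination (norm := module) -h + j1 - j2 - lam • j3
  -- the key identity
  have key : ∀ x y : n, ⁅⁅z, x⁆, ⁅z, y⁆⁆ =
      ⁅z, ⁅z, ⁅x, y⁆⁆⁆ + (2 * lam + 1) • ⁅z, ⁅x, y⁆⁆ + (lam ^ 2 + lam) • ⁅x, y⁆ := by
    intro x y
    have hw : ∀ w : n,
        ⁅⁅⁅z, x⁆, ⁅z, y⁆⁆ - (⁅z, ⁅z, ⁅x, y⁆⁆⁆ + (2 * lam + 1) • ⁅z, ⁅x, y⁆⁆
          + (lam ^ 2 + lam) • ⁅x, y⁆), w⁆ = 0 := by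
      intro w
      have h := h2 x y w
      rw [hlg x y] at h
      have j1 := lie_lie ⁅z, x⁆ ⁅z, y⁆ w
      have j2 := lie_lie ⁅z, x⁆ y w
      have j3 := lie_lie x ⁅z, y⁆ w
      have j4 := lie_lie x y w
      have j5 : ⁅⁅z, ⁅x, y⁆⁆, w⁆ = ⁅⁅⁅z, x⁆, y⁆, w⁆ + ⁅⁅x, ⁅z, y⁆⁆, w⁆ := by
        rw [← add_lie, ← leibniz_lie]
      simp only [lie_add, add_lie, lie_smul, smul_lie, lie_sub, sub_lie, smul_add, smul_smul,
        smul_sub] at h ⊢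
      linear_combination (norm := module) -h + j1 + lam • j2 + lam • j3 + lam ^ 2 • j4 + lam • j5
    have hm := hinj _ hw
    rw [sub_eq_zero] at hm
    exact hm
  refine ⟨?_, ?_, ?_⟩
  · ext y
    have h := key z y
    simp only [lie_self, zero_lie] at h
    simp only [LinearMap.add_apply, LinearMap.smul_apply, LinearMap.zero_apply, pow_succ,
      pow_zero, Module.End.mul_apply, Module.End.one_apply, LieAlgebra.ad_apply]
    linear_combination (norm := module) -h
  · rintro rfl
    have hz : z = 0 := by
      apply aux_zero_postlie z
      intro x y
      have h := key x y
      simpa using h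
    subst hz
    refine ⟨rfl, ?_, ?_⟩
    · intro x y; simp
    · intro x y
      have h := hlg x y
      simpa using h
  · rintro rfl
    have hz : z = 0 := by
      have hneg : (-z : n) = 0 := by
        apply aux_zero_postlie (-z)
        intro x y
        have h := key x y
        simp only [neg_lie, lie_neg, neg_neg] at *
        linear_combination (norm := module) h
      simpa using hneg
    subst hz
    refine ⟨rfl, ?_, ?_⟩
    · intro x y; simp
    · intro x y
      have h := hlg x y
      simp only [zero_lie, lie_zero, zero_add] at h
      rw [h]
      norm_num
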